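/- Let h : ℝ → [0,∞) be a log-concave probability density with respect to Lebesgue measure (i.e., ∫_ℝ h = 1 and h(t·x + (1−t)·y) ≥ h(x)^t·h(y)^{1−t} for all x, y ∈ ℝ, t ∈ [0,1]), and let m ∈ ℝ be a mode of h, i.e., h(y) ≤ h(m) for all y. Then for all y ∈ ℝ, h(y) ≤ h(m)·min( 1, e^{1 − h(m)·|y − m|} ). -/

import Mathlib

open Real MeasureTheory

private lemma aux_seg (h : ℝ → ℝ) (hint : Integrable h) (hnn : ∀ x, 0 ≤ h x)
    (h1 : ∫ x, h x = 1) (p q : ℝ) (hpq : p < q) (g : ℝ → ℝ) (hg : Continuous g)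
    (hb : ∀ t ∈ Set.Icc (0:ℝ) 1, g t ≤ h ((q - p) * t + p)) :
    (q - p) * ∫ t in (0:ℝ)..1, g t ≤ 1 := by
  have hc : q - p ≠ 0 := sub_ne_zero.2 hpq.ne'
  have hcpos : 0 < q - p := sub_pos.2 hpq
  have hiq : IntervalIntegrable h volume p q := hint.intervalIntegrable
  have hcomp : IntervalIntegrable (fun t => h ((q - p) * t + p)) volume 0 1 := by
    have := (hiq.comp_add_right p).comp_mul_left (c := q - p)
    simpa [sub_self, div_self hc] using this
  have hmono : ∫ t in (0:ℝ)..1, g t ≤ ∫ t in (0:ℝ)..1, h ((q - p) * t + p) :=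
    intervalIntegral.integral_mono_on zero_le_one (hg.intervalIntegrable 0 1) hcomp hb
  have heq : ∫ t in (0:ℝ)..1, h ((q - p) * t + p) = (q - p)⁻¹ * ∫ x in p..q, h x := by
    rw [intervalIntegral.integral_comp_mul_add h hc p]
    norm_num [smul_eq_mul]
  have hle1 : ∫ x in p..q, h x ≤ 1 := by
    rw [intervalIntegral.integral_of_le hpq.le, ← h1]
    exact setIntegral_le_integral hint (Filter.Eventually.of_forall hnn)
  calc (q - p) * ∫ t in (0:ℝ)..1, g t
      ≤ (q - p) * ((q - p)⁻¹ * ∫ x in p..q, h x) := by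
        rw [← heq]; exact mul_le_mul_of_nonneg_left hmono hcpos.le
    _ = ∫ x in p..q, h x := by field_simp
    _ ≤ 1 := hle1

/-- if `h` is a log-concave probability density on ℝ with mode `m`
(global maximizer), then `h(y) ≤ h(m)·min(1, e^{1 − h(m)·|y−m|})` for all `y`. -/
theorem stmt18 (h : ℝ → ℝ) (m : ℝ)
    (h0 : ∀ y, 0 ≤ h y) (h1 : ∫ y, h y = 1)
    (hlc : ∀ x y t : ℝ, 0 ≤ t → t ≤ 1 →
      h (t * x + (1 - t) * y) ≥ h x ^ t * h y ^ (1 - t))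
    (hm : ∀ y, h y ≤ h m) :
    ∀ y : ℝ, h y ≤ h m * min 1 (Real.exp (1 - h m * |y - m|)) := by
  intro y
  rcases (h0 m).eq_or_lt with hM | hM
  · -- h m = 0
    have hy0 : h y ≤ 0 := by rw [hM]; exact hm y
    have : (0:ℝ) ≤ min 1 (Real.exp (1 - h m * |y - m|)) := le_min zero_le_one (exp_nonneg _)
    nlinarith [hm y]
  by_cases hsmall : h m * |y - m| ≤ 1
  · rw [min_eq_left (Real.one_le_exp (by linarith)), mul_one]
    exact hm y
  push_neg at hsmall
  rw [min_eq_right (Real.exp_le_one_iff.mpr (by linarith))]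
  rcases (h0 y).eq_or_lt with hy | hy
  · rw [← hy]; positivity
  -- main case
  have hint : Integrable h := by
    by_contra hc
    rw [MeasureTheory.integral_undef hc] at h1
    norm_num at h1
  set M := h m with hMdef
  set r := h y / M with hrdef
  have hr0 : 0 < r := div_pos hy hM
  have hr1 : r ≤ 1 := (div_le_one hM).2 (hm y)
  have hyr : h y = M * r := by rw [hrdef]; field_simp
  set c := Real.log r with hcdef
  have hrc : r = Real.exp c := (Real.exp_log hr0).symm
  have hc0 : c ≤ 0 := Real.log_nonpos hr0.le hr1
  have hym : y ≠ m := by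
    rintro rfl
    simp only [sub_self, abs_zero, mul_zero] at hsmall
    linarith
  have hd0 : 0 < |y - m| := abs_pos.2 (sub_ne_zero.2 hym)
  -- pointwise bounds from log-concavity
  have hbound : ∀ t : ℝ, 0 ≤ t → t ≤ 1 → (h y) ^ t * M ^ (1 - t) = M * Real.exp (c * t) := by
    intro t ht0 ht1
    rw [hyr, hrc, Real.mul_rpow hM.le (exp_nonneg _), ← Real.exp_mul,
      mul_right_comm, ← Real.rpow_add hM]
    norm_num
  -- the key integral inequality
  have hkey : |y - m| * ∫ t in (0:ℝ)..1, M * Real.exp (c * t) ≤ 1 := by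
    rcases lt_or_gt_of_ne hym with hlt | hlt
    · -- y < m : use segment from y to m
      have := aux_seg h hint h0 h1 y m hlt (fun t => M * Real.exp (c * (1 - t)))
        (by fun_prop) ?_
      · have habs : |y - m| = m - y := by rw [abs_sub_comm]; exact abs_of_pos (by linarith)
        rw [habs]
        have hswap : (∫ t in (0:ℝ)..1, M * Real.exp (c * (1 - t)))
            = ∫ t in (0:ℝ)..1, M * Real.exp (c * t) := by
          have := intervalIntegral.integral_comp_sub_left
            (fun t => M * Real.exp (c * t)) 1 (a := (0:ℝ)) (b := 1)
          norm_num at this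
          simpa using this
        rw [← hswap]; exact this
      · intro t ht
        have hl := hlc m y t ht.1 ht.2
        have e : (m - y) * t + y = t * m + (1 - t) * y := by ring
        rw [e]
        refine le_trans (le_of_eq ?_) hl
        have hb2 : (h y) ^ (1 - t) * M ^ (1 - (1 - t)) = M * Real.exp (c * (1 - t)) :=
          hbound (1 - t) (by linarith [ht.2]) (by linarith [ht.1])
        simp only [sub_sub_cancel] at hb2
        show M * Real.exp (c * (1 - t)) = h m ^ t * h y ^ (1 - t)
        rw [← hb2, hMdef]; ring
    · -- m < y : use segment from m to y
      have := aux_seg h hint h0 h1 m y hlt (fun t => M * Real.exp (c * t))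
        (by fun_prop) ?_
      · have habs : |y - m| = y - m := abs_of_pos (by linarith)
        rw [habs]; exact this
      · intro t ht
        have hl := hlc y m t ht.1 ht.2
        have e : (y - m) * t + m = t * y + (1 - t) * m := by ring
        rw [e]
        show M * Real.exp (c * t) ≤ _
        exact le_trans (le_of_eq (hbound t ht.1 ht.2).symm) hl
  -- compute the integral
  rcases hc0.eq_or_lt with hceq | hclt
  · -- c = 0, i.e. r = 1 : contradiction with hsmall
    exfalso
    rw [hceq] at hkey
    simp at hkey
    nlinarith
  · -- c < 0
    have hcne : c ≠ 0 := hclt.ne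
    have hIval : (∫ t in (0:ℝ)..1, M * Real.exp (c * t)) = M * ((Real.exp c - 1) / c) := by
      rw [intervalIntegral.integral_const_mul]
      congr 1
      rw [intervalIntegral.integral_comp_mul_left Real.exp hcne]
      norm_num [smul_eq_mul, integral_exp, div_eq_inv_mul]
    rw [hIval, ← hrc] at hkey
    set d := |y - m| with hddef
    set s := -c with hsdef
    have hs0 : 0 < s := by simp [hsdef]; linarith
    have hrs : r = Real.exp (-s) := by rw [hsdef, neg_neg, ← hrc]
    have h1r : 0 < 1 - r := by
      have : r < 1 := by
        rw [hrs]; calc Real.exp (-s) < Real.exp 0 := Real.exp_lt_exp.2 (by linarith)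
          _ = 1 := Real.exp_zero
      linarith
    have he1 : (r - 1) / c = (1 - r) / s := by
      rw [hsdef]; rw [div_neg, ← neg_div, neg_sub]
    rw [he1] at hkey
    -- from hkey : d * (M * ((1 - r)/s)) ≤ 1, deduce M*d*(1-r) ≤ s
    have h4 : M * d * (1 - r) ≤ s := by
      have hmul := mul_le_mul_of_nonneg_right hkey hs0.le
      have hcancel : (1 - r) / s * s = 1 - r := div_mul_cancel₀ _ hs0.ne'
      nlinarith
    have h5 : (s + 1) * r ≤ 1 := by
      rw [hrs]
      calc (s + 1) * Real.exp (-s) ≤ Real.exp s * Real.exp (-s) :=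
            mul_le_mul_of_nonneg_right (Real.add_one_le_exp s) (exp_nonneg _)
        _ = 1 := by rw [← Real.exp_add]; simp
    have h6 : M * d ≤ 1 + s := by nlinarith
    rw [hyr]
    apply mul_le_mul_of_nonneg_left _ hM.le
    rw [hrs]
    exact Real.exp_le_exp.2 (by linarith)
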